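/- Let R be a commutative ring and a, b, c ∈ R such that the discriminant Δ of the Weierstrass curve with coefficients (a₁, a₂, a₃, a₄, a₆) = (0, a, 0, b, c) is a unit in R. Then R[x, y]/(y² − x³ − a·x² − b·x − c) is a smooth R-algebra (formally smooth and of finite presentation). -/

import Mathlib

open MvPolynomial

universe u

lemma splitAux (R : Type u) [CommRing R] (F G₀ G₁ Hp : MvPolynomial (Fin 2) R)
    (key : G₀ * pderiv 0 F + G₁ * pderiv 1 F = 1 - Hp * F) :
    ∃ l, l ∘ₗ KaehlerDifferential.kerCotangentToTensor R (MvPolynomial (Fin 2) R)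
        (MvPolynomial (Fin 2) R ⧸ Ideal.span {F}) = LinearMap.id := by
  classical
  have hker : RingHom.ker (algebraMap (MvPolynomial (Fin 2) R)
      (MvPolynomial (Fin 2) R ⧸ Ideal.span {F})) = Ideal.span {F} := by
    rw [Ideal.Quotient.algebraMap_eq, Ideal.mk_ker]
  set K : Ideal (MvPolynomial (Fin 2) R) := RingHom.ker (algebraMap (MvPolynomial (Fin 2) R)
      (MvPolynomial (Fin 2) R ⧸ Ideal.span {F})) with hK
  have hF : F ∈ K := hker ▸ Ideal.subset_span rfl
  set ξ : K.Cotangent := K.toCotangent ⟨F, hF⟩ with hξ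
  have hIle : (Ideal.span {F} : Submodule (MvPolynomial (Fin 2) R) (MvPolynomial (Fin 2) R)) ≤
      LinearMap.ker (LinearMap.toSpanSingleton (MvPolynomial (Fin 2) R) K.Cotangent ξ) := by
    intro p hp
    rw [LinearMap.mem_ker, LinearMap.toSpanSingleton_apply]
    exact Ideal.Cotangent.smul_eq_zero_of_mem (hker ▸ hp) ξ
  set ν : (MvPolynomial (Fin 2) R ⧸ Ideal.span {F}) →ₗ[MvPolynomial (Fin 2) R] K.Cotangent :=
    Submodule.liftQ _ (LinearMap.toSpanSingleton (MvPolynomial (Fin 2) R) K.Cotangent ξ)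
      hIle with hν
  set bΩ := KaehlerDifferential.mvPolynomialBasis R (Fin 2) with hbΩ
  set μ : Ω[MvPolynomial (Fin 2) R⁄R] →ₗ[MvPolynomial (Fin 2) R] MvPolynomial (Fin 2) R :=
    G₀ • bΩ.coord 0 + G₁ • bΩ.coord 1 with hμ
  refine ⟨ν ∘ₗ (TensorProduct.rid (MvPolynomial (Fin 2) R)
    (MvPolynomial (Fin 2) R ⧸ Ideal.span {F})).toLinearMap ∘ₗ
    LinearMap.lTensor (MvPolynomial (Fin 2) R ⧸ Ideal.span {F}) μ, ?_⟩
  have hνmk : ∀ q : MvPolynomial (Fin 2) R,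
      ν (algebraMap (MvPolynomial (Fin 2) R) (MvPolynomial (Fin 2) R ⧸ Ideal.span {F}) q)
        = q • ξ := by
    intro q
    rw [Ideal.Quotient.algebraMap_eq, ← Ideal.Quotient.mk_eq_mk, hν, Submodule.liftQ_apply,
      LinearMap.toSpanSingleton_apply]
  have main : (ν ∘ₗ (TensorProduct.rid (MvPolynomial (Fin 2) R)
      (MvPolynomial (Fin 2) R ⧸ Ideal.span {F})).toLinearMap ∘ₗ
      LinearMap.lTensor (MvPolynomial (Fin 2) R ⧸ Ideal.span {F}) μ)
      (KaehlerDifferential.kerCotangentToTensor R (MvPolynomial (Fin 2) R)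
        (MvPolynomial (Fin 2) R ⧸ Ideal.span {F}) ξ) = ξ := by
    rw [hξ, KaehlerDifferential.kerCotangentToTensor_toCotangent]
    have hμD : μ (KaehlerDifferential.D R (MvPolynomial (Fin 2) R) F)
        = G₀ * pderiv 0 F + G₁ * pderiv 1 F := by
      rw [hμ]
      rw [LinearMap.add_apply, LinearMap.smul_apply, LinearMap.smul_apply,
        Module.Basis.coord_apply, Module.Basis.coord_apply, hbΩ,
        KaehlerDifferential.mvPolynomialBasis_repr_apply,
        KaehlerDifferential.mvPolynomialBasis_repr_apply, smul_eq_mul, smul_eq_mul]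
    rw [LinearMap.comp_apply, LinearMap.comp_apply, LinearMap.lTensor_tmul,
      LinearEquiv.coe_coe, TensorProduct.rid_tmul, hμD, key,
      ← Algebra.algebraMap_eq_smul_one, hνmk, sub_smul, one_smul,
      Ideal.Cotangent.smul_eq_zero_of_mem (K.mul_mem_left Hp hF) ξ, sub_zero]
  apply LinearMap.ext
  intro z
  obtain ⟨x, rfl⟩ := K.toCotangent_surjective z
  obtain ⟨p, hp⟩ : ∃ p : MvPolynomial (Fin 2) R, (x : MvPolynomial (Fin 2) R) = p * F := by
    obtain ⟨p, hp⟩ := Ideal.mem_span_singleton.mp (hker.le x.2)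
    exact ⟨p, by rw [hp, mul_comm]⟩
  have hxsm : x = p • (⟨F, hF⟩ : K) := Subtype.ext (by simpa using hp)
  rw [LinearMap.comp_apply, hxsm]
  simp only [map_smul, ← hξ]
  rw [main, LinearMap.id_apply]


/-- The Weierstrass relation `y² − x³ − a·x² − b·x − c` in the polynomial ring in two
variables `x = X 0`, `y = X 1`. -/
noncomputable def wRel (A : Type*) [CommRing A] (a b c : A) : MvPolynomial (Fin 2) A :=
  X 1 ^ 2 - X 0 ^ 3 - C a * X 0 ^ 2 - C b * X 0 - C c

/-- Let `R` be a commutative ring and `a, b, c ∈ R` such that the discriminant `Δ` of the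
Weierstrass curve with coefficients `(a₁, a₂, a₃, a₄, a₆) = (0, a, 0, b, c)` is a unit in `R`.
Then `R[x,y]/(y² − x³ − ax² − bx − c)` is a smooth `R`-algebra (formally smooth and of finite
presentation). -/
theorem stmt15 (R : Type*) [CommRing R] (a b c : R)
    (hΔ : IsUnit (WeierstrassCurve.mk 0 a 0 b c : WeierstrassCurve R).Δ) :
    Algebra.FormallySmooth R (MvPolynomial (Fin 2) R ⧸ Ideal.span {wRel R a b c}) ∧
    Algebra.FinitePresentation R (MvPolynomial (Fin 2) R ⧸ Ideal.span {wRel R a b c}) := by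
  classical
  refine ⟨?_, Algebra.FinitePresentation.quotient ⟨{wRel R a b c}, by simp⟩⟩
  letI : Algebra.FormallySmooth R (MvPolynomial (Fin 2) R) :=
    Algebra.FormallySmooth.of_equiv (MvPolynomial.renameEquiv R (Equiv.ulift.{0, 0} (α := Fin 2)))
  have hf : Function.Surjective (algebraMap (MvPolynomial (Fin 2) R)
      (MvPolynomial (Fin 2) R ⧸ Ideal.span {wRel R a b c})) := by
    rw [Ideal.Quotient.algebraMap_eq]; exact Ideal.Quotient.mk_surjective
  rw [Algebra.FormallySmooth.iff_split_injection hf]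
  set v : R := ↑(hΔ.unit⁻¹) with hv
  have hvΔ : v * (-64*a^3*c + 16*a^2*b^2 - 64*b^3 - 432*c^2 + 288*a*b*c) = 1 := by
    have hΔeq : (WeierstrassCurve.mk 0 a 0 b c : WeierstrassCurve R).Δ
        = -64*a^3*c + 16*a^2*b^2 - 64*b^3 - 432*c^2 + 288*a*b*c := by
      simp [WeierstrassCurve.Δ, WeierstrassCurve.b₂, WeierstrassCurve.b₄, WeierstrassCurve.b₆,
        WeierstrassCurve.b₈]
      ring
    rw [← hΔeq]
    exact hΔ.unit.inv_mul
  refine splitAux R (wRel R a b c)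
    (C (-16*v) * (C (2*a^2-6*b) * X 0^2 + C (2*a^3-7*a*b+9*c) * X 0 + C (a^2*b-4*b^2+3*a*c)))
    (C (8*v) * (C (18*b-6*a^2) * X 0 + C (-4*a^3+15*a*b-27*c)) * X 1)
    (C (-16*v) * (C (18*b-6*a^2) * X 0 + C (-4*a^3+15*a*b-27*c))) ?_
  have hp0 : pderiv 0 (wRel R a b c) = -(3 * X 0 ^ 2 + 2 * C a * X 0 + C b) := by
    simp [wRel, map_ofNat]; ring
  have hp1 : pderiv 1 (wRel R a b c) = 2 * X 1 := by simp [wRel]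
  have h1 : (1 : MvPolynomial (Fin 2) R)
      = C (v * (-64*a^3*c + 16*a^2*b^2 - 64*b^3 - 432*c^2 + 288*a*b*c)) := by
    rw [hvΔ, map_one]
  rw [hp0, hp1, h1]
  simp only [wRel, map_mul, map_add, map_sub, map_pow, map_neg, map_ofNat]
  ring
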